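/- Let E' ≤ E be wald topologies with leaf partitions L_1,...,L_K and L'_1,...,L'_{K'}, let u, v lie in a common block L'_{α'} of E', and let e' ∈ E'. Then the following are equivalent: (a) e' separates u and v (i.e., e' ∈ E'(u,v)); (b) R_{e'} ∩ E(u,v) ≠ ∅; (c) R_{e'} ⊆ E(u,v). -/
import Mathlib


attribute [local instance] Classical.propDecidable

/-- A split: an unordered pair of finite sets of labels. -/
abbrev Split (N : ℕ) := Sym2 (Finset (Fin N))

namespace Wald

variable {N : ℕ}

/-- `e` is a split of the block `M`: `e = {A, B}` with `A, B` a partition of `M`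
into two nonempty parts. -/
def IsSplitOf (e : Split N) (M : Finset (Fin N)) : Prop :=
  ∃ A B : Finset (Fin N), e = s(A, B) ∧ A ∪ B = M ∧ Disjoint A B ∧
    A.Nonempty ∧ B.Nonempty

/-- Two splits `A|B` and `C|D` are compatible if one of the four intersections
`A∩C, A∩D, B∩C, B∩D` is empty. -/
def Compatible (e f : Split N) : Prop :=
  ∃ A B C D : Finset (Fin N), e = s(A, B) ∧ f = s(C, D) ∧
    (A ∩ C = ∅ ∨ A ∩ D = ∅ ∨ B ∩ C = ∅ ∨ B ∩ D = ∅)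

/-- The split `e = A|B` separates `u` and `v` if `u ∈ A` and `v ∈ B` (or vice versa). -/
def Separates (e : Split N) (u v : Fin N) : Prop :=
  ∃ A B : Finset (Fin N), e = s(A, B) ∧ u ∈ A ∧ v ∈ B

/-- The restriction `e|_{L'}` of a split `e = A|B`: `(A ∩ L')|(B ∩ L')`. -/
def restrict (e : Split N) (L' : Finset (Fin N)) : Split N :=
  Sym2.map (· ∩ L') e

/-- The underlying block `A ∪ B` of a split `e = A|B`. -/
def blockOf (e : Split N) : Finset (Fin N) :=
  Sym2.lift ⟨fun A B => A ∪ B, fun _ _ => Finset.union_comm _ _⟩ e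

/-- The restriction of `e = A|B` to `L'` is a valid split iff both
`A ∩ L'` and `B ∩ L'` are nonempty. -/
def ValidRestrict (e : Split N) (L' : Finset (Fin N)) : Prop :=
  ∃ A B : Finset (Fin N), e = s(A, B) ∧ (A ∩ L').Nonempty ∧ (B ∩ L').Nonempty

/-- A wald topology on the label set `{1,…,N}`: a partition of the labels into
blocks, together with a set of splits of the blocks, such that splits of a common
block are pairwise compatible and any two distinct labels of a common block are
separated by some split. -/
structure WaldTop (N : ℕ) where
  blocks : Finset (Finset (Fin N))
  splits : Finset (Split N)
  nonempty_blocks : ∀ B ∈ blocks, B.Nonempty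
  cover : ∀ u : Fin N, ∃! B, B ∈ blocks ∧ u ∈ B
  split_mem : ∀ e ∈ splits, ∃ B ∈ blocks, IsSplitOf e B
  compat : ∀ e ∈ splits, ∀ f ∈ splits, blockOf e = blockOf f → Compatible e f
  separating : ∀ B ∈ blocks, ∀ u ∈ B, ∀ v ∈ B, u ≠ v →
    ∃ e ∈ splits, Separates e u v

/-- The partial order `E' ≤ E` on wald topologies: refinement of the leaf
partitions, restriction of splits, and the cut property. -/
def LE' (E' E : WaldTop N) : Prop :=
  (∀ B' ∈ E'.blocks, ∃ B ∈ E.blocks, B' ⊆ B) ∧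
  (∀ e' ∈ E'.splits, ∃ e ∈ E.splits, restrict e (blockOf e') = e') ∧
  (∀ B₁ ∈ E'.blocks, ∀ B₂ ∈ E'.blocks, B₁ ≠ B₂ →
    ∀ B ∈ E.blocks, B₁ ⊆ B → B₂ ⊆ B →
      ∃ A C : Finset (Fin N), s(A, C) ∈ E.splits ∧ B₁ ⊆ A ∧ B₂ ⊆ C)

/-- `R_{e'}`: the splits of `E` whose restriction to the block of `e'` equals `e'`. -/
def Rset (E : WaldTop N) (e' : Split N) : Set (Split N) :=
  {e | e ∈ E.splits ∧ restrict e (blockOf e') = e'}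

/-- `R_dis`: the splits of `E` admitting a valid restriction to some block of `E'`
which does not belong to `E'`. -/
def Rdis (E' E : WaldTop N) : Set (Split N) :=
  {e | e ∈ E.splits ∧ ∃ B' ∈ E'.blocks, ValidRestrict e B' ∧ restrict e B' ∉ E'.splits}

/-- `R_cut`: the splits of `E` admitting no valid restriction to any block of `E'`. -/
def Rcut (E' E : WaldTop N) : Set (Split N) :=
  {e | e ∈ E.splits ∧ ∀ B' ∈ E'.blocks, ¬ ValidRestrict e B'}

/-- `E(u,v)`: the set of splits of `E` separating `u` and `v`. -/
def sepSet (E : WaldTop N) (u v : Fin N) : Set (Split N) :=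
  {e | e ∈ E.splits ∧ Separates e u v}

end Wald

open Wald in
lemma Wald.sep_restrict {N : ℕ} (e : Split N) (L' : Finset (Fin N)) (u v : Fin N)
    (hu : u ∈ L') (hv : v ∈ L') :
    Separates (restrict e L') u v ↔ Separates e u v := by
  induction e using Sym2.inductionOn with
  | hf A B =>
    have hre : restrict s(A, B) L' = s(A ∩ L', B ∩ L') := rfl
    constructor
    · rintro ⟨C, D, hCD, huC, hvD⟩
      rw [hre, Sym2.eq_iff] at hCD
      rcases hCD with ⟨hC, hD⟩ | ⟨hC, hD⟩
      · exact ⟨A, B, rfl, (Finset.mem_inter.mp (hC ▸ huC)).1,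
          (Finset.mem_inter.mp (hD ▸ hvD)).1⟩
      · exact ⟨B, A, Sym2.eq_swap, (Finset.mem_inter.mp (hD ▸ huC)).1,
          (Finset.mem_inter.mp (hC ▸ hvD)).1⟩
    · rintro ⟨C, D, hCD, huC, hvD⟩
      refine ⟨C ∩ L', D ∩ L', ?_, Finset.mem_inter.mpr ⟨huC, hu⟩,
        Finset.mem_inter.mpr ⟨hvD, hv⟩⟩
      rw [hCD]; rfl

open Wald in
/-- For `E' ≤ E`, labels `u, v` in a common block `B'` of `E'` and
`e' ∈ E'` a split of `B'`, the following are equivalent: (a) `e'` separates `u`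
and `v`; (b) `R_{e'} ∩ E(u,v) ≠ ∅`; (c) `R_{e'} ⊆ E(u,v)`. -/
theorem stmt_10 {N : ℕ} (E' E : WaldTop N) (h : LE' E' E)
    (B' : Finset (Fin N)) (hB' : B' ∈ E'.blocks)
    (u v : Fin N) (hu : u ∈ B') (hv : v ∈ B')
    (e' : Split N) (he' : e' ∈ E'.splits) (hbe' : blockOf e' = B') :
    (Separates e' u v ↔ (Rset E e' ∩ sepSet E u v).Nonempty) ∧
    (Separates e' u v ↔ Rset E e' ⊆ sepSet E u v) := by
  obtain ⟨e, heE, hres⟩ := h.2.1 e' he'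
  have key : ∀ f ∈ Rset E e', (Separates e' u v ↔ Separates f u v) := by
    rintro f ⟨hf, hfr⟩
    rw [← hfr, hbe']
    exact sep_restrict f B' u v hu hv
  have heR : e ∈ Rset E e' := ⟨heE, hres⟩
  constructor
  · constructor
    · intro hsep
      exact ⟨e, heR, heE, (key e heR).mp hsep⟩
    · rintro ⟨f, hfR, _, hfsep⟩
      exact (key f hfR).mpr hfsep
  · constructor
    · intro hsep f hfR
      exact ⟨hfR.1, (key f hfR).mp hsep⟩
    · intro hsub
      exact (key e heR).mpr (hsub heR).2
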